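/- arXiv:2501.14006 — 4 statements merged into one kernel-verified Lean document; each statement's English description precedes it below -/
import Mathlib

section
/- Let φ : X → Z map a covariate space to a latent space, let ν⁰, ν¹ : Z → ℝ be L-Lipschitz and ν̂⁰, ν̂¹ : Z → ℝ be L̂-Lipschitz. Given a finite dataset of n samples (x_i, t_i, y_i) with y_i = ν^{t_i}(φ(x_i)), define for each i its mirror twin x_i^m as a sample with opposite treatment t_j = 1 - t_i minimizing ‖φ(x_i) - φ(x_j)‖, and define the counterfactual importance weight w_j as the number of indices i whose mirror twin is sample j. Then the empirical PEHE (1/n) ∑_i ((ν̂¹ - ν̂⁰)(φ(x_i)) - (ν¹ - ν⁰)(φ(x_i)))² is at most (4/n)[ ∑_i (1 + w_i)((ν̂^{t_i} ∘ φ)(x_i) - y_i)² + (L² + L̂²) ∑_i ‖φ(x_i) - φ(x_i^m)‖² ]. -/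
private lemma four_sq_aux (a b c e : ℝ) :
    (a + b + c + e)^2 ≤ 4 * (a^2 + b^2 + c^2 + e^2) := by
  nlinarith [sq_nonneg (a-b), sq_nonneg (a-c), sq_nonneg (a-e),
    sq_nonneg (b-c), sq_nonneg (b-e), sq_nonneg (c-e)]


/-- Theorem 1 of the ALRITE paper (noiseless-outcome formulation). -/
theorem stmt_3 {X : Type*} {d n : ℕ} (hn : 0 < n)
    (φ : X → EuclideanSpace ℝ (Fin d)) (L Lhat : NNReal)
    (ν νhat : Bool → EuclideanSpace ℝ (Fin d) → ℝ)
    (hν : ∀ b, LipschitzWith L (ν b)) (hνhat : ∀ b, LipschitzWith Lhat (νhat b))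
    (x : Fin n → X) (t : Fin n → Bool) (y : Fin n → ℝ)
    (hy : ∀ i, y i = ν (t i) (φ (x i)))
    (m : Fin n → Fin n)
    (hmt : ∀ i, t (m i) = !(t i))
    (hmmin : ∀ i j, t j = !(t i) → ‖φ (x i) - φ (x (m i))‖ ≤ ‖φ (x i) - φ (x j)‖)
    (w : Fin n → ℕ) (hw : ∀ j, w j = (Finset.univ.filter fun i => m i = j).card) :
    (1 / n : ℝ) * ∑ i, ((νhat true (φ (x i)) - νhat false (φ (x i)))
        - (ν true (φ (x i)) - ν false (φ (x i))))^2 ≤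
      (4 / n : ℝ) * ((∑ i, (1 + (w i : ℝ)) * (νhat (t i) (φ (x i)) - y i)^2)
        + ((L : ℝ)^2 + (Lhat : ℝ)^2) * ∑ i, ‖φ (x i) - φ (x (m i))‖^2) := by
  set z : Fin n → EuclideanSpace ℝ (Fin d) := fun i => φ (x i) with hz
  set ε : Fin n → ℝ := fun i => νhat (t i) (z i) - y i with hεdef
  -- pointwise bound
  have key : ∀ i, ((νhat true (z i) - νhat false (z i))
      - (ν true (z i) - ν false (z i)))^2
      ≤ 4 * (ε i ^ 2 + ε (m i) ^ 2
        + ((L:ℝ)^2 + (Lhat:ℝ)^2) * ‖z i - z (m i)‖^2) := by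
    intro i
    set A := ε i with hA
    set B := ε (m i) with hB
    set C := νhat (!(t i)) (z (m i)) - νhat (!(t i)) (z i) with hC
    set E := ν (!(t i)) (z i) - ν (!(t i)) (z (m i)) with hE
    set dd := ‖z i - z (m i)‖ with hdd
    have hCle : |C| ≤ (Lhat:ℝ) * dd := by
      have h := (hνhat (!(t i))).dist_le_mul (z (m i)) (z i)
      rw [Real.dist_eq, dist_eq_norm, norm_sub_rev] at h
      exact h
    have hEle : |E| ≤ (L:ℝ) * dd := by
      have h := (hν (!(t i))).dist_le_mul (z i) (z (m i))
      rw [Real.dist_eq, dist_eq_norm] at h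
      exact h
    have hC2 : C^2 ≤ ((Lhat:ℝ) * dd)^2 := by
      rw [← sq_abs C]
      exact pow_le_pow_left₀ (abs_nonneg _) hCle 2
    have hE2 : E^2 ≤ ((L:ℝ) * dd)^2 := by
      rw [← sq_abs E]
      exact pow_le_pow_left₀ (abs_nonneg _) hEle 2
    have hid : ((νhat true (z i) - νhat false (z i))
        - (ν true (z i) - ν false (z i)))^2 = (A - B + C + E)^2 := by
      have hyi : y i = ν (t i) (z i) := hy i
      have hym : y (m i) = ν (!(t i)) (z (m i)) := by
        rw [hy (m i), hmt i]
      rw [hA, hB, hC, hE, hεdef]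
      simp only
      rw [hyi, hym, hmt i]
      cases ht : t i <;> simp [ht] <;> ring
    rw [hid]
    have h1 : (A - B + C + E)^2 ≤ 4 * (A^2 + (-B)^2 + C^2 + E^2) := by
      have := four_sq_aux A (-B) C E
      linarith [this]
    have hnb : (-B)^2 = B^2 := by ring
    have heq : ((Lhat:ℝ) * dd)^2 + ((L:ℝ) * dd)^2 = ((L:ℝ)^2 + (Lhat:ℝ)^2) * dd^2 := by
      ring
    rw [hnb] at h1
    linarith [hC2, hE2]
  -- fiberwise identity for weights
  have hfib : ∑ i, ε (m i) ^ 2 = ∑ j, (w j : ℝ) * ε j ^ 2 := by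
    rw [← Finset.sum_fiberwise Finset.univ m (fun i => ε (m i) ^ 2)]
    refine Finset.sum_congr rfl fun j _ => ?_
    rw [hw j, Finset.sum_congr rfl (fun i hi => ?_), Finset.sum_const, nsmul_eq_mul]
    rw [Finset.mem_filter] at hi
    rw [hi.2]
  -- sum up
  have hsum : ∑ i, ((νhat true (z i) - νhat false (z i))
      - (ν true (z i) - ν false (z i)))^2
      ≤ 4 * ((∑ i, (1 + (w i : ℝ)) * ε i ^ 2)
        + ((L:ℝ)^2 + (Lhat:ℝ)^2) * ∑ i, ‖z i - z (m i)‖^2) := by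
    calc ∑ i, ((νhat true (z i) - νhat false (z i))
        - (ν true (z i) - ν false (z i)))^2
        ≤ ∑ i, 4 * (ε i ^ 2 + ε (m i) ^ 2
          + ((L:ℝ)^2 + (Lhat:ℝ)^2) * ‖z i - z (m i)‖^2) :=
          Finset.sum_le_sum fun i _ => key i
      _ = 4 * ((∑ i, (1 + (w i : ℝ)) * ε i ^ 2)
          + ((L:ℝ)^2 + (Lhat:ℝ)^2) * ∑ i, ‖z i - z (m i)‖^2) := by
          have hsplit : ∑ i, (1 + (w i : ℝ)) * ε i ^ 2
              = (∑ i, ε i ^ 2) + ∑ i, (w i : ℝ) * ε i ^ 2 := by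
            rw [← Finset.sum_add_distrib]
            exact Finset.sum_congr rfl fun i _ => by ring
          have hexp : ∑ i, 4 * (ε i ^ 2 + ε (m i) ^ 2
                + ((L:ℝ)^2 + (Lhat:ℝ)^2) * ‖z i - z (m i)‖^2)
              = 4 * ((∑ i, ε i ^ 2) + (∑ i, ε (m i) ^ 2)
                + ((L:ℝ)^2 + (Lhat:ℝ)^2) * ∑ i, ‖z i - z (m i)‖^2) := by
            simp only [mul_add, Finset.sum_add_distrib, Finset.mul_sum]
          rw [hexp, hsplit]
          rw [hfib]
          all_goals ring
  have hn' : (0:ℝ) < n := by exact_mod_cast hn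
  have h4 : (4 / n : ℝ) * ((∑ i, (1 + (w i : ℝ)) * ε i ^ 2)
      + ((L:ℝ)^2 + (Lhat:ℝ)^2) * ∑ i, ‖z i - z (m i)‖^2)
      = (1 / n : ℝ) * (4 * ((∑ i, (1 + (w i : ℝ)) * ε i ^ 2)
      + ((L:ℝ)^2 + (Lhat:ℝ)^2) * ∑ i, ‖z i - z (m i)‖^2)) := by ring
  calc (1 / n : ℝ) * ∑ i, ((νhat true (z i) - νhat false (z i))
      - (ν true (z i) - ν false (z i)))^2
      ≤ (1 / n : ℝ) * (4 * ((∑ i, (1 + (w i : ℝ)) * ε i ^ 2)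
        + ((L:ℝ)^2 + (Lhat:ℝ)^2) * ∑ i, ‖z i - z (m i)‖^2)) := by
        apply mul_le_mul_of_nonneg_left hsum
        positivity
    _ = (4 / n : ℝ) * ((∑ i, (1 + (w i : ℝ)) * ε i ^ 2)
        + ((L:ℝ)^2 + (Lhat:ℝ)^2) * ∑ i, ‖z i - z (m i)‖^2) := by ring
end

section
/- Let X be a random variable, T a {0,1}-valued random variable, and Y⁰ an integrable real random variable with Y⁰ independent of T given X (conditional exchangeability). Let φ be a measurable map and suppose E[Y⁰ | X] = ν⁰(φ(X)) a.s. for some measurable ν⁰. Then E[Y⁰ | φ(X), T = 0] = ν⁰(φ(X)) a.s. on {T = 0}. -/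
open MeasureTheory ProbabilityTheory

lemma bool_msp_eq : (⊤ : MeasurableSpace Bool)
    = MeasurableSpace.generateFrom {{false}} := by
  refine le_antisymm ?_ (MeasurableSpace.generateFrom_le fun s hs => by
    simp only [Set.mem_singleton_iff] at hs; subst hs; exact (measurableSet_singleton false))
  intro s _
  have hb : ∀ b : Bool, MeasurableSet[MeasurableSpace.generateFrom {{false}}] {b} := by
    intro b
    cases b
    · exact MeasurableSpace.measurableSet_generateFrom (Set.mem_singleton _)
    · have : ({true} : Set Bool) = ({false} : Set Bool)ᶜ := by
        ext b; cases b <;> simp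
      rw [this]
      exact (MeasurableSpace.measurableSet_generateFrom (Set.mem_singleton _)).compl
  rw [← Set.biUnion_of_singleton s]
  exact MeasurableSet.biUnion s.to_countable fun b _ => hb b

theorem stmt_6 {Ω 𝒳 𝒵 : Type*} [MeasurableSpace Ω] [StandardBorelSpace Ω]
    [MeasurableSpace 𝒳] [MeasurableSpace 𝒵]
    (μ : Measure Ω) [IsProbabilityMeasure μ]
    (X : Ω → 𝒳) (hX : Measurable X)
    (T : Ω → Bool) (hT : Measurable T)
    (Y0 : Ω → ℝ) (hY0 : Integrable Y0 μ)
    (hXle : MeasurableSpace.comap X inferInstance ≤ ‹MeasurableSpace Ω›)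
    -- conditional exchangeability: Y⁰ ⟂ T | X
    (hexch : CondIndepFun (MeasurableSpace.comap X inferInstance) hXle Y0 T μ)
    (φ : 𝒳 → 𝒵) (hφ : Measurable φ)
    (ν0 : 𝒵 → ℝ) (hν0 : Measurable ν0)
    (h : μ[Y0 | MeasurableSpace.comap X inferInstance] =ᵐ[μ] fun ω => ν0 (φ (X ω))) :
    (μ[|{ω | T ω = false}])[Y0 | MeasurableSpace.comap (fun ω => φ (X ω)) inferInstance]
      =ᵐ[μ[|{ω | T ω = false}]] fun ω => ν0 (φ (X ω)) := by
  set A : Set Ω := {ω | T ω = false} with hAdef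
  have hApre : A = T ⁻¹' {false} := by ext ω; simp [hAdef]
  have hA : MeasurableSet A := by rw [hApre]; exact hT (measurableSet_singleton false)
  set g : Ω → ℝ := fun ω => ν0 (φ (X ω)) with hgdef
  -- σ-algebra comparisons
  have hmZ_eq : MeasurableSpace.comap (fun ω => φ (X ω)) inferInstance
      = (MeasurableSpace.comap φ inferInstance).comap X := by
    rw [MeasurableSpace.comap_comp]; rfl
  have hmZ_le_mX : MeasurableSpace.comap (fun ω => φ (X ω)) inferInstance
      ≤ MeasurableSpace.comap X inferInstance := by
    rw [hmZ_eq]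
    exact MeasurableSpace.comap_mono (measurable_iff_comap_le.mp hφ)
  have hmZ : MeasurableSpace.comap (fun ω => φ (X ω)) inferInstance ≤ ‹MeasurableSpace Ω› :=
    hmZ_le_mX.trans hXle
  -- trivial case: the conditioning event is null
  by_cases hA0 : μ A = 0
  · have hzero : μ[|A] = 0 := by
      rw [ProbabilityTheory.cond, Measure.restrict_eq_zero.mpr hA0, smul_zero]
    rw [hzero]
    simp [Filter.EventuallyEq]
  -- measurability of g
  have hgX : Measurable[MeasurableSpace.comap X inferInstance] g := by
    have hXm : Measurable[MeasurableSpace.comap X inferInstance] X :=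
      measurable_iff_comap_le.mpr le_rfl
    exact (hν0.comp hφ).comp hXm
  have hgZ : Measurable[MeasurableSpace.comap (fun ω => φ (X ω)) inferInstance] g := by
    have hZm : Measurable[MeasurableSpace.comap (fun ω => φ (X ω)) inferInstance]
        (fun ω => φ (X ω)) := measurable_iff_comap_le.mpr le_rfl
    exact hν0.comp hZm
  have hgint : Integrable g μ := integrable_condExp.congr h
  -- measurable version of Y0
  obtain ⟨Y0', hY0'sm, heq⟩ : ∃ Y0' : Ω → ℝ, StronglyMeasurable Y0' ∧ Y0 =ᵐ[μ] Y0' :=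
    ⟨hY0.1.mk Y0, hY0.1.stronglyMeasurable_mk, hY0.1.ae_eq_mk⟩
  have hY0'meas : Measurable Y0' := hY0'sm.measurable
  have hY0'int : Integrable Y0' μ := hY0.congr heq
  obtain ⟨N, hNsub, hNm, hNnull⟩ :=
    exists_measurable_superset_of_null (μ := μ) (ae_iff.mp heq)
  -- the conditional kernel does not see the modification
  have hκN : ∀ᵐ ω ∂(μ.trim hXle),
      condExpKernel μ (MeasurableSpace.comap X inferInstance) ω N = 0 := by
    have h1 := condExpKernel_ae_eq_condExp (μ := μ) hXle hNm
    have h2 : (μ⟦N | MeasurableSpace.comap X inferInstance⟧) =ᵐ[μ] 0 := by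
      have hind : N.indicator (fun _ => (1 : ℝ)) =ᵐ[μ] 0 := by
        filter_upwards [measure_eq_zero_iff_ae_notMem.mp hNnull] with a ha
        simp [Set.indicator_of_notMem ha]
      calc (μ⟦N | MeasurableSpace.comap X inferInstance⟧)
          =ᵐ[μ] μ[(0 : Ω → ℝ) | MeasurableSpace.comap X inferInstance] := condExp_congr_ae hind
        _ = 0 := condExp_zero
    have h3 : (fun ω => (condExpKernel μ (MeasurableSpace.comap X inferInstance) ω N).toReal)
        =ᵐ[μ] (0 : Ω → ℝ) := h1.trans h2
    have h4 : (fun ω => (condExpKernel μ (MeasurableSpace.comap X inferInstance) ω N).toReal)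
        =ᵐ[μ.trim hXle] (0 : Ω → ℝ) := by
      exact (StronglyMeasurable.ae_eq_trim_iff (μ := μ) hXle
        ((measurable_condExpKernel hNm).ennreal_toReal).stronglyMeasurable
        stronglyMeasurable_const).mpr h3
    filter_upwards [h4] with ω hω
    have hfin := measure_ne_top (condExpKernel μ (MeasurableSpace.comap X inferInstance) ω) N
    simpa [ENNReal.toReal_eq_zero_iff, hfin] using hω
  have hexch' : CondIndepFun (MeasurableSpace.comap X inferInstance) hXle Y0' T μ := by
    refine Kernel.IndepFun.congr' hexch ?_ (Filter.Eventually.of_forall fun a => Filter.EventuallyEq.rfl)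
    filter_upwards [hκN] with a ha
    refine ae_iff.mpr (le_antisymm ?_ bot_le)
    calc condExpKernel μ (MeasurableSpace.comap X inferInstance) a {x | ¬Y0 x = Y0' x}
        ≤ condExpKernel μ (MeasurableSpace.comap X inferInstance) a N := measure_mono hNsub
      _ = 0 := ha
  -- a.e. independence under the conditional kernel
  have hrat : ∀ᵐ ω ∂μ, ∀ q : ℚ,
      condExpKernel μ (MeasurableSpace.comap X inferInstance) ω
          (Y0' ⁻¹' Set.Iic (q : ℝ) ∩ T ⁻¹' {false})
        = condExpKernel μ (MeasurableSpace.comap X inferInstance) ω (Y0' ⁻¹' Set.Iic (q : ℝ))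
          * condExpKernel μ (MeasurableSpace.comap X inferInstance) ω (T ⁻¹' {false}) := by
    rw [ae_all_iff]
    intro q
    exact ae_of_ae_trim hXle (hexch' _ _ ⟨Set.Iic (q : ℝ), measurableSet_Iic, rfl⟩
      ⟨{false}, measurableSet_singleton false, rfl⟩)
  have hindep : ∀ᵐ ω ∂μ,
      IndepFun Y0' T (condExpKernel μ (MeasurableSpace.comap X inferInstance) ω) := by
    filter_upwards [hrat] with ω hω
    refine IndepSets.indep (p1 := Set.preimage Y0' '' (⋃ q : ℚ, {Set.Iic (q : ℝ)}))
      (p2 := {T ⁻¹' {false}}) hY0'meas.comap_le hT.comap_le ?_ ?_ ?_ ?_ ?_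
    · rintro _ ⟨s1, hs1, rfl⟩ _ ⟨s2, hs2, rfl⟩ -
      simp only [Set.mem_iUnion, Set.mem_singleton_iff] at hs1 hs2
      obtain ⟨q1, rfl⟩ := hs1
      obtain ⟨q2, rfl⟩ := hs2
      refine ⟨Set.Iic (min (q1 : ℝ) q2), ?_, ?_⟩
      · simp only [Set.mem_iUnion, Set.mem_singleton_iff]
        rcases le_total (q1 : ℝ) q2 with hle | hle
        · exact ⟨q1, by rw [min_eq_left hle]⟩
        · exact ⟨q2, by rw [min_eq_right hle]⟩
      · rw [← Set.preimage_inter, Set.Iic_inter_Iic]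
    · rintro s hs t ht -
      simp only [Set.mem_singleton_iff] at hs ht
      subst hs; subst ht
      simp
    · show MeasurableSpace.comap Y0' (borel ℝ) = _
      rw [Real.borel_eq_generateFrom_Iic_rat, MeasurableSpace.comap_generateFrom]
    · show MeasurableSpace.comap T (⊤ : MeasurableSpace Bool) = _
      rw [bool_msp_eq, MeasurableSpace.comap_generateFrom, Set.image_singleton]
    · rintro s t ⟨s', hs', rfl⟩ ht
      simp only [Set.mem_iUnion, Set.mem_singleton_iff] at hs' ht
      obtain ⟨q, rfl⟩ := hs'
      subst ht
      exact Filter.Eventually.of_forall fun _ => hω q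
  -- the indicator of A as a function of T
  have hβ : A.indicator (fun _ => (1 : ℝ)) = (fun b : Bool => if b = false then (1:ℝ) else 0) ∘ T := by
    funext ω
    by_cases hω : T ω = false
    · have : ω ∈ A := hω
      simp [Set.indicator_of_mem this, Function.comp, hω]
    · have : ω ∉ A := hω
      simp [Set.indicator_of_notMem this, Function.comp, hω]
  -- the a.e. product formula for integrals against the kernel
  have hmulA : ∀ᵐ ω ∂μ,
      ∫ y, (A.indicator Y0') y ∂(condExpKernel μ (MeasurableSpace.comap X inferInstance) ω)
        = (∫ y, Y0' y ∂(condExpKernel μ (MeasurableSpace.comap X inferInstance) ω))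
          * ((condExpKernel μ (MeasurableSpace.comap X inferInstance) ω) A).toReal := by
    filter_upwards [hindep] with ω hind
    set κω := condExpKernel μ (MeasurableSpace.comap X inferInstance) ω with hκω
    have hcomp : IndepFun Y0' (A.indicator (fun _ => (1:ℝ))) κω := by
      rw [hβ]
      exact hind.comp measurable_id measurable_from_top
    have hmul := IndepFun.integral_mul_eq_mul_integral hcomp hY0'meas.aestronglyMeasurable
      ((measurable_from_top.comp hT).aestronglyMeasurable.congr
        (Filter.EventuallyEq.of_eq hβ.symm))
    have h1 : Y0' * A.indicator (fun _ => (1:ℝ)) = A.indicator Y0' := by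
      funext ω'
      by_cases hω' : ω' ∈ A
      · simp [Set.indicator_of_mem hω']
      · simp [Set.indicator_of_notMem hω']
    have h2 : ∫ y, A.indicator (fun _ => (1:ℝ)) y ∂κω = (κω A).toReal :=
      integral_indicator_one hA
    rw [← h1, hmul, h2]
  -- key identity:  μ[1_A • Y0 | σ(X)] = g ⬝ μ⟦A | σ(X)⟧  a.e.
  have key : μ[A.indicator Y0 | MeasurableSpace.comap X inferInstance] =ᵐ[μ]
      fun ω => g ω * (μ⟦A | MeasurableSpace.comap X inferInstance⟧) ω := by
    have c1 : μ[A.indicator Y0 | MeasurableSpace.comap X inferInstance]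
        =ᵐ[μ] μ[A.indicator Y0' | MeasurableSpace.comap X inferInstance] := by
      refine condExp_congr_ae ?_
      filter_upwards [heq] with ω hω
      by_cases hmem : ω ∈ A
      · simp [Set.indicator_of_mem hmem, hω]
      · simp [Set.indicator_of_notMem hmem]
    have c2 := condExp_ae_eq_integral_condExpKernel (μ := μ) hXle (hY0'int.indicator hA)
    have c4 := (condExp_ae_eq_integral_condExpKernel (μ := μ) hXle hY0'int).symm
    have c5 : μ[Y0' | MeasurableSpace.comap X inferInstance]
        =ᵐ[μ] μ[Y0 | MeasurableSpace.comap X inferInstance] := condExp_congr_ae heq.symm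
    have c7 := condExpKernel_ae_eq_condExp (μ := μ) hXle hA
    filter_upwards [c1, c2, hmulA, c4, c5, h, c7] with ω e1 e2 e3 e4 e5 e6 e7
    rw [e1, e2, e3, e4, e5, e6]
    exact congrArg _ e7
  -- the same identity for g in place of Y0, via the pull-out property
  have keyg : μ[A.indicator g | MeasurableSpace.comap X inferInstance] =ᵐ[μ]
      fun ω => g ω * (μ⟦A | MeasurableSpace.comap X inferInstance⟧) ω := by
    have h1 : A.indicator g = g * A.indicator (fun _ => (1:ℝ)) := by
      funext ω'
      by_cases hω' : ω' ∈ A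
      · simp [Set.indicator_of_mem hω']
      · simp [Set.indicator_of_notMem hω']
    have h2 : Integrable (g * A.indicator (fun _ => (1:ℝ))) μ := by
      rw [← h1]; exact hgint.indicator hA
    have := condExp_mul_of_stronglyMeasurable_left (m := MeasurableSpace.comap X inferInstance)
      hgX.stronglyMeasurable h2 ((integrable_const (1:ℝ)).indicator hA)
    rw [h1]
    exact this
  -- integral comparison on X-measurable sets intersected with A
  have star : ∀ u : Set Ω, MeasurableSet[MeasurableSpace.comap X inferInstance] u →
      ∫ ω in u ∩ A, Y0 ω ∂μ = ∫ ω in u ∩ A, g ω ∂μ := by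
    intro u hu
    rw [← setIntegral_indicator hA, ← setIntegral_indicator hA,
      ← setIntegral_condExp hXle (hY0.indicator hA) hu,
      ← setIntegral_condExp hXle (hgint.indicator hA) hu]
    exact integral_congr_ae (ae_restrict_of_ae (key.trans keyg.symm))
  -- conclude via the characterization of the conditional expectation
  haveI : IsProbabilityMeasure (μ[|A]) := cond_isProbabilityMeasure hA0
  have hcondeq : μ[|A] = (μ A)⁻¹ • μ.restrict A := rfl
  have hY0cond : Integrable Y0 (μ[|A]) := by
    rw [hcondeq]
    exact (hY0.restrict).smul_measure (ENNReal.inv_ne_top.mpr hA0)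
  have hgcond : Integrable g (μ[|A]) := by
    rw [hcondeq]
    exact (hgint.restrict).smul_measure (ENNReal.inv_ne_top.mpr hA0)
  refine (ae_eq_condExp_of_forall_setIntegral_eq hmZ hY0cond
    (fun s _ _ => hgcond.integrableOn) ?_ ?_).symm
  · intro s hs _
    have hsΩ : MeasurableSet s := hmZ s hs
    rw [hcondeq, Measure.restrict_smul, Measure.restrict_restrict hsΩ,
      integral_smul_measure, integral_smul_measure]
    congr 1
    exact (star s (hmZ_le_mX s hs)).symm
  · exact StronglyMeasurable.aestronglyMeasurable hgZ.stronglyMeasurable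
end

section
/- Under SUTVA and conditional exchangeability, the Robinson decomposition holds: Y - m(X) = (T - η(X))τ(X) + ε with E[ε | X, T] = 0, where m(x) = E[Y | X = x], η(x) = P(T = 1 | X = x), and τ(x) = E[Y¹ - Y⁰ | X = x]. -/
open MeasureTheory ProbabilityTheory

open Set Filter
open scoped ENNReal NNReal

section AuxRobinson

variable {Ω 𝒳 : Type*} [mΩ : MeasurableSpace Ω] [StandardBorelSpace Ω] [MeasurableSpace 𝒳]

/-- product formula for conditional expectations under conditional independence -/
lemma aux_prod (μ : Measure Ω) [IsProbabilityMeasure μ] (X : Ω → 𝒳)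
    (hXle : MeasurableSpace.comap X inferInstance ≤ mΩ)
    (Z Z' : Ω → ℝ × ℝ) (hZ' : Measurable Z') (hZZ' : Z =ᵐ[μ] Z')
    (T : Ω → Bool) (hT : Measurable T)
    (hexch : CondIndepFun (MeasurableSpace.comap X inferInstance) hXle Z T μ)
    (f : Ω → ℝ) (hf : Integrable f μ)
    (hfm : Measurable[MeasurableSpace.comap Z' inferInstance] f) (b : Bool) :
    μ[fun ω => f ω * (T ⁻¹' {b}).indicator (fun _ => (1:ℝ)) ω
        | MeasurableSpace.comap X inferInstance]
      =ᵐ[μ] fun ω => (μ[f | MeasurableSpace.comap X inferInstance]) ω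
        * (μ[(T ⁻¹' {b}).indicator (fun _ => (1:ℝ)) | MeasurableSpace.comap X inferInstance]) ω := by
  have hZle : MeasurableSpace.comap Z' inferInstance ≤ mΩ := hZ'.comap_le
  have hfs : StronglyMeasurable[MeasurableSpace.comap Z' inferInstance] f := hfm.stronglyMeasurable
  have hB : MeasurableSet (T ⁻¹' {b}) := hT (measurableSet_singleton b)
  set B := T ⁻¹' {b} with hBdef
  set indB := B.indicator (fun _ => (1:ℝ)) with hindB
  have hindB_int : Integrable indB μ := (integrable_const (1:ℝ)).indicator hB
  have hindB_bd : ∀ ω, |indB ω| ≤ 1 := by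
    intro ω; by_cases h : ω ∈ B <;> simp [hindB, indicator, h]
  set g := μ[indB | MeasurableSpace.comap X inferInstance] with hgdef
  have hg_sm : StronglyMeasurable[MeasurableSpace.comap X inferInstance] g :=
    stronglyMeasurable_condExp
  have hg_meas : Measurable g := (hg_sm.mono hXle).measurable
  have hg_nonneg : 0 ≤ᵐ[μ] g :=
    condExp_nonneg (Eventually.of_forall fun ω => indicator_nonneg (fun _ _ => zero_le_one) ω)
  have hg_le_one : g ≤ᵐ[μ] fun _ => (1:ℝ) := by
    have h1 : indB ≤ᵐ[μ] fun _ => (1:ℝ) := Eventually.of_forall fun ω => by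
      by_cases h : ω ∈ B <;> simp [hindB, indicator, h]
    calc g ≤ᵐ[μ] μ[(fun _ => (1:ℝ)) | MeasurableSpace.comap X inferInstance] :=
          condExp_mono hindB_int (integrable_const 1) h1
      _ = fun _ => (1:ℝ) := condExp_const hXle 1
  have hg_abs : ∀ᵐ ω ∂μ, |g ω| ≤ 1 := by
    filter_upwards [hg_nonneg, hg_le_one] with ω h0 h1
    exact abs_le.mpr ⟨by simpa using le_trans (by norm_num) (h0 : (0:ℝ) ≤ g ω), h1⟩
  have hfind_int : Integrable (fun ω => f ω * indB ω) μ := by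
    refine Integrable.mono' hf.abs (hf.1.mul hindB_int.1) ?_
    refine Eventually.of_forall fun ω => ?_
    rw [Real.norm_eq_abs, abs_mul]
    calc |f ω| * |indB ω| ≤ |f ω| * 1 :=
        mul_le_mul_of_nonneg_left (hindB_bd ω) (abs_nonneg _)
      _ = |f ω| := mul_one _
  -- the measurable null set containing {Z ≠ Z'}
  obtain ⟨N, hNmeas, hNnull, hNsub⟩ :
      ∃ N, MeasurableSet N ∧ μ N = 0 ∧ {ω | Z ω ≠ Z' ω} ⊆ N := by
    refine ⟨toMeasurable μ {ω | Z ω ≠ Z' ω}, measurableSet_toMeasurable _ _, ?_,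
      subset_toMeasurable _ _⟩
    rw [measure_toMeasurable]
    exact hZZ'
  have hκN : ∀ᵐ ω ∂μ, condExpKernel μ (MeasurableSpace.comap X inferInstance) ω N = 0 := by
    have h1 := condExpKernel_ae_eq_condExp hXle hNmeas (μ := μ)
    have h2 : (N.indicator (fun _ => (1:ℝ))) =ᵐ[μ] 0 := by
      have : ∀ᵐ ω ∂μ, ω ∉ N := by
        rw [ae_iff]; simpa using hNnull
      filter_upwards [this] with ω hω
      simp [indicator_of_notMem hω]
    have h3 : μ[N.indicator (fun _ => (1:ℝ)) | MeasurableSpace.comap X inferInstance]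
        =ᵐ[μ] 0 := by
      calc μ[N.indicator (fun _ => (1:ℝ)) | MeasurableSpace.comap X inferInstance]
          =ᵐ[μ] μ[(0 : Ω → ℝ) | MeasurableSpace.comap X inferInstance] := condExp_congr_ae h2
        _ =ᵐ[μ] 0 := by rw [condExp_zero]
    filter_upwards [h1, h3] with ω hω1 hω2
    have ht : (condExpKernel μ (MeasurableSpace.comap X inferInstance) ω N).toReal = 0 := by
      rw [← measureReal_def, hω1]; exact hω2
    have hfin : condExpKernel μ (MeasurableSpace.comap X inferInstance) ω N ≠ ⊤ :=
      measure_ne_top _ _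
    exact ((ENNReal.toReal_eq_zero_iff _).mp ht).resolve_right hfin
  -- main set-integral identity
  have hset : ∀ A : Set Ω, MeasurableSet[MeasurableSpace.comap X inferInstance] A →
      ∫ ω in A, f ω * indB ω ∂μ = ∫ ω in A, f ω * g ω ∂μ := by
    intro A hA
    have hA' : MeasurableSet A := hXle _ hA
    set ν₀ : Measure Ω := μ.restrict (A ∩ B) with hν₀
    set ν₁ : Measure Ω := (μ.restrict A).withDensity (fun ω => ((g ω).toNNReal : ℝ≥0∞)) with hν₁
    have htoNN : Measurable (fun ω => (g ω).toNNReal) := hg_meas.real_toNNReal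
    have htrim : ν₀.trim hZle = ν₁.trim hZle := by
      refine @Measure.ext Ω (MeasurableSpace.comap Z' inferInstance) _ _ fun s hs => ?_
      rw [trim_measurableSet_eq hZle hs, trim_measurableSet_eq hZle hs]
      obtain ⟨u, hu, rfl⟩ := hs
      have hs' : MeasurableSet (Z' ⁻¹' u) := hZ' hu
      have hker : ∀ᵐ ω ∂μ,
          condExpKernel μ (MeasurableSpace.comap X inferInstance) ω (Z' ⁻¹' u ∩ B)
            = condExpKernel μ (MeasurableSpace.comap X inferInstance) ω (Z' ⁻¹' u)
              * condExpKernel μ (MeasurableSpace.comap X inferInstance) ω B := by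
        have h := ae_of_ae_trim hXle
          (hexch (Z ⁻¹' u) (T ⁻¹' {b}) ⟨u, hu, rfl⟩ ⟨{b}, trivial, rfl⟩)
        filter_upwards [h, hκN] with ω hω hN0
        have key : ∀ p q : Set Ω, (∀ x, x ∉ N → (x ∈ p ↔ x ∈ q)) →
            condExpKernel μ (MeasurableSpace.comap X inferInstance) ω p
              = condExpKernel μ (MeasurableSpace.comap X inferInstance) ω q := by
          have hsub : ∀ p q : Set Ω, (∀ x, x ∉ N → (x ∈ p ↔ x ∈ q)) →
              condExpKernel μ (MeasurableSpace.comap X inferInstance) ω p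
                ≤ condExpKernel μ (MeasurableSpace.comap X inferInstance) ω q := by
            intro p q hpq
            calc condExpKernel μ (MeasurableSpace.comap X inferInstance) ω p
                ≤ condExpKernel μ (MeasurableSpace.comap X inferInstance) ω (q ∪ N) := by
                  refine measure_mono fun x hx => ?_
                  by_cases hxN : x ∈ N
                  · exact Or.inr hxN
                  · exact Or.inl ((hpq x hxN).mp hx)
              _ ≤ condExpKernel μ (MeasurableSpace.comap X inferInstance) ω q
                  + condExpKernel μ (MeasurableSpace.comap X inferInstance) ω N :=
                  measure_union_le _ _
              _ = condExpKernel μ (MeasurableSpace.comap X inferInstance) ω q := by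
                  rw [hN0, add_zero]
          exact fun p q hpq =>
            le_antisymm (hsub p q hpq) (hsub q p fun x hx => (hpq x hx).symm)
        have e1 : ∀ x, x ∉ N → (x ∈ Z' ⁻¹' u ∩ B ↔ x ∈ Z ⁻¹' u ∩ T ⁻¹' {b}) := by
          intro x hx
          have hzz : Z x = Z' x := by by_contra h; exact hx (hNsub h)
          simp [hBdef, mem_preimage, hzz]
        have e2 : ∀ x, x ∉ N → (x ∈ Z' ⁻¹' u ↔ x ∈ Z ⁻¹' u) := by
          intro x hx
          have hzz : Z x = Z' x := by by_contra h; exact hx (hNsub h)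
          simp [mem_preimage, hzz]
        rw [key _ _ e1, key _ _ e2, hω]
      have hc1 := condExpKernel_ae_eq_condExp hXle (hs'.inter hB) (μ := μ)
      have hc2 := condExpKernel_ae_eq_condExp hXle hs' (μ := μ)
      have hc3 := condExpKernel_ae_eq_condExp hXle hB (μ := μ)
      have hprod : μ[(Z' ⁻¹' u ∩ B).indicator (fun _ => (1:ℝ))
            | MeasurableSpace.comap X inferInstance]
          =ᵐ[μ] fun ω => (μ[(Z' ⁻¹' u).indicator (fun _ => (1:ℝ))
            | MeasurableSpace.comap X inferInstance]) ω * g ω := by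
        filter_upwards [hker, hc1, hc2, hc3] with ω h1 h2 h3 h4
        rw [← h2, ← h3]
        show _ = _ * g ω
        rw [hgdef, hindB, ← h4]; simp only [measureReal_def]; rw [h1, ENNReal.toReal_mul]
      have hind_int : Integrable ((Z' ⁻¹' u ∩ B).indicator (fun _ => (1:ℝ))) μ :=
        (integrable_const (1:ℝ)).indicator (hs'.inter hB)
      have hinds_int : Integrable ((Z' ⁻¹' u).indicator (fun _ => (1:ℝ))) μ :=
        (integrable_const (1:ℝ)).indicator hs'
      have hgs_int : Integrable (g * (Z' ⁻¹' u).indicator (fun _ => (1:ℝ))) μ := by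
        refine Integrable.mono' (integrable_const (1:ℝ))
          (hg_meas.aestronglyMeasurable.mul hinds_int.1) ?_
        filter_upwards [hg_abs] with ω h1
        rw [Pi.mul_apply, Real.norm_eq_abs, abs_mul]
        have h2 : |(Z' ⁻¹' u).indicator (fun _ => (1:ℝ)) ω| ≤ 1 := by
          by_cases h : ω ∈ Z' ⁻¹' u <;> simp [indicator, h]
        calc |g ω| * _ ≤ 1 * 1 := mul_le_mul h1 h2 (abs_nonneg _) zero_le_one
          _ = 1 := one_mul 1
      have hpull := condExp_mul_of_stronglyMeasurable_left (μ := μ) hg_sm hgs_int hinds_int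
      -- the real-valued chain
      have hchain : (μ (Z' ⁻¹' u ∩ (A ∩ B))).toReal = ∫ ω in Z' ⁻¹' u ∩ A, g ω ∂μ := by
        have e0 : (μ (Z' ⁻¹' u ∩ (A ∩ B))).toReal = ∫ _ω in Z' ⁻¹' u ∩ (A ∩ B), (1:ℝ) ∂μ := by
          rw [setIntegral_const]; simp; rfl
        have e1 : ∫ _ω in Z' ⁻¹' u ∩ (A ∩ B), (1:ℝ) ∂μ
            = ∫ ω in A, (Z' ⁻¹' u ∩ B).indicator (fun _ => (1:ℝ)) ω ∂μ := by
          have hseteq : Z' ⁻¹' u ∩ (A ∩ B) = A ∩ (Z' ⁻¹' u ∩ B) := by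
            ext x; simp only [mem_inter_iff]; tauto
          rw [setIntegral_indicator (hs'.inter hB), hseteq]
        have e2 : ∫ ω in A, (Z' ⁻¹' u ∩ B).indicator (fun _ => (1:ℝ)) ω ∂μ
            = ∫ ω in A, (μ[(Z' ⁻¹' u ∩ B).indicator (fun _ => (1:ℝ))
                | MeasurableSpace.comap X inferInstance]) ω ∂μ :=
          (setIntegral_condExp hXle hind_int hA).symm
        have e3 : ∫ ω in A, (μ[(Z' ⁻¹' u ∩ B).indicator (fun _ => (1:ℝ))
                | MeasurableSpace.comap X inferInstance]) ω ∂μ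
            = ∫ ω in A, (μ[(Z' ⁻¹' u).indicator (fun _ => (1:ℝ))
                | MeasurableSpace.comap X inferInstance]) ω * g ω ∂μ :=
          integral_congr_ae (ae_restrict_of_ae hprod)
        have e4 : ∫ ω in A, (μ[(Z' ⁻¹' u).indicator (fun _ => (1:ℝ))
                | MeasurableSpace.comap X inferInstance]) ω * g ω ∂μ
            = ∫ ω in A, (μ[g * (Z' ⁻¹' u).indicator (fun _ => (1:ℝ))
                | MeasurableSpace.comap X inferInstance]) ω ∂μ := by
          refine integral_congr_ae (ae_restrict_of_ae ?_)
          filter_upwards [hpull] with ω hω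
          rw [hω, Pi.mul_apply, mul_comm]
        have e5 : ∫ ω in A, (μ[g * (Z' ⁻¹' u).indicator (fun _ => (1:ℝ))
                | MeasurableSpace.comap X inferInstance]) ω ∂μ
            = ∫ ω in A, g ω * (Z' ⁻¹' u).indicator (fun _ => (1:ℝ)) ω ∂μ := by
          have := setIntegral_condExp hXle hgs_int hA (μ := μ)
          simpa using this
        have e6 : ∫ ω in A, g ω * (Z' ⁻¹' u).indicator (fun _ => (1:ℝ)) ω ∂μ
            = ∫ ω in Z' ⁻¹' u ∩ A, g ω ∂μ := by
          have hpt : ∀ ω, g ω * (Z' ⁻¹' u).indicator (fun _ => (1:ℝ)) ω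
              = (Z' ⁻¹' u).indicator g ω := by
            intro ω; by_cases h : ω ∈ Z' ⁻¹' u <;> simp [indicator, h]
          rw [integral_congr_ae (Eventually.of_forall hpt), setIntegral_indicator hs',
            inter_comm A (Z' ⁻¹' u)]
        rw [e0, e1, e2, e3, e4, e5, e6]
      -- put together in ℝ≥0∞
      have hv0 : ν₀ (Z' ⁻¹' u) = μ (Z' ⁻¹' u ∩ (A ∩ B)) := by
        rw [hν₀, Measure.restrict_apply hs']
      have hv1 : ν₁ (Z' ⁻¹' u) = ENNReal.ofReal (∫ ω in Z' ⁻¹' u ∩ A, g ω ∂μ) := by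
        rw [hν₁, withDensity_apply _ hs', Measure.restrict_restrict hs']
        have hofr : (fun x => ((g x).toNNReal : ℝ≥0∞)) = fun x => ENNReal.ofReal (g x) :=
          rfl
        rw [hofr, ← ofReal_integral_eq_lintegral_ofReal
          (integrable_condExp.integrableOn) (ae_restrict_of_ae hg_nonneg)]
      rw [hv0, hv1, ← hchain, ENNReal.ofReal_toReal (measure_ne_top _ _)]
    -- now transfer integrals through the trimmed measures
    have i1 : ∫ ω in A, f ω * indB ω ∂μ = ∫ ω, f ω ∂ν₀ := by
      have hpt : ∀ ω, f ω * indB ω = B.indicator f ω := by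
        intro ω; by_cases h : ω ∈ B <;> simp [hindB, indicator, h]
      rw [integral_congr_ae (Eventually.of_forall hpt), setIntegral_indicator hB, hν₀]
    have i2 : ∫ ω, f ω ∂ν₀ = ∫ ω, f ω ∂ν₁ := by
      rw [integral_trim hZle hfs (μ := ν₀), integral_trim hZle hfs (μ := ν₁), htrim]
    have i3 : ∫ ω, f ω ∂ν₁ = ∫ ω in A, f ω * g ω ∂μ := by
      rw [hν₁, integral_withDensity_eq_integral_smul htoNN]
      refine integral_congr_ae (ae_restrict_of_ae ?_)
      filter_upwards [hg_nonneg] with ω h0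
      rw [NNReal.smul_def, Real.coe_toNNReal _ (by simpa using h0), smul_eq_mul, mul_comm]
    rw [i1, i2, i3]
  -- conclude by uniqueness of conditional expectation
  have hgf_int : Integrable (g * f) μ := by
    refine Integrable.mono' hf.abs (hg_meas.aestronglyMeasurable.mul hf.1) ?_
    filter_upwards [hg_abs] with ω h1
    rw [Pi.mul_apply, Real.norm_eq_abs, abs_mul]
    calc |g ω| * |f ω| ≤ 1 * |f ω| :=
        mul_le_mul_of_nonneg_right h1 (abs_nonneg _)
      _ = |f ω| := one_mul _
  have hpull2 := condExp_mul_of_stronglyMeasurable_left (μ := μ) hg_sm hgf_int hf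
  have hcondf_int : Integrable (μ[f | MeasurableSpace.comap X inferInstance]) μ :=
    integrable_condExp
  refine (ae_eq_condExp_of_forall_setIntegral_eq hXle hfind_int ?_ ?_ ?_).symm
  · intro s hs _
    refine (Integrable.mono' hcondf_int.abs
      ((stronglyMeasurable_condExp.mono hXle).measurable.aestronglyMeasurable.mul
        hg_meas.aestronglyMeasurable) ?_).integrableOn
    filter_upwards [hg_abs] with ω h1
    rw [Pi.mul_apply, Real.norm_eq_abs, abs_mul]
    calc |(μ[f | MeasurableSpace.comap X inferInstance]) ω| * |g ω|
        ≤ |(μ[f | MeasurableSpace.comap X inferInstance]) ω| * 1 :=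
          mul_le_mul_of_nonneg_left h1 (abs_nonneg _)
      _ = _ := mul_one _
  · intro s hs _
    have e1 : ∫ ω in s, (μ[f | MeasurableSpace.comap X inferInstance]) ω * g ω ∂μ
        = ∫ ω in s, (μ[g * f | MeasurableSpace.comap X inferInstance]) ω ∂μ := by
      refine integral_congr_ae (ae_restrict_of_ae ?_)
      filter_upwards [hpull2] with ω hω
      rw [hω, Pi.mul_apply, mul_comm]
    have e2 : ∫ ω in s, (μ[g * f | MeasurableSpace.comap X inferInstance]) ω ∂μ
        = ∫ ω in s, g ω * f ω ∂μ := by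
      have := setIntegral_condExp hXle hgf_int hs (μ := μ)
      simpa using this
    have e3 : ∫ ω in s, g ω * f ω ∂μ = ∫ ω in s, f ω * indB ω ∂μ := by
      rw [hset s hs]
      exact integral_congr_ae (Eventually.of_forall fun ω => mul_comm _ _)
    rw [e1, e2, e3]
  · exact (stronglyMeasurable_condExp.mul hg_sm).aestronglyMeasurable

end AuxRobinson

/-- Robinson's decomposition: the residual `ε = Y - m(X) - (T - η(X)) τ(X)` satisfies
`E[ε | X, T] = 0` under SUTVA and conditional exchangeability. -/
theorem stmt_12 {Ω 𝒳 : Type*} [MeasurableSpace Ω] [StandardBorelSpace Ω] [MeasurableSpace 𝒳]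
    (μ : Measure Ω) [IsProbabilityMeasure μ]
    (X : Ω → 𝒳) (hX : Measurable X)
    (T : Ω → Bool) (hT : Measurable T)
    (Y0 Y1 : Ω → ℝ) (hY0 : Integrable Y0 μ) (hY1 : Integrable Y1 μ)
    (Y : Ω → ℝ) (hSUTVA : ∀ ω, Y ω = if T ω then Y1 ω else Y0 ω)
    (hXle : MeasurableSpace.comap X inferInstance ≤ ‹MeasurableSpace Ω›)
    (hTle : MeasurableSpace.comap T inferInstance ≤ ‹MeasurableSpace Ω›)
    -- conditional exchangeability: (Y⁰, Y¹) ⟂ T | X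
    (hexch : CondIndepFun (MeasurableSpace.comap X inferInstance) hXle
      (fun ω => (Y0 ω, Y1 ω)) T μ)
    (Tind : Ω → ℝ) (hTind : ∀ ω, Tind ω = if T ω then (1:ℝ) else 0)
    (m : Ω → ℝ) (hm : m = μ[Y | MeasurableSpace.comap X inferInstance])
    (η : Ω → ℝ) (hη : η = μ[Tind | MeasurableSpace.comap X inferInstance])
    (τ : Ω → ℝ)
    (hτ : τ = μ[(fun ω => Y1 ω - Y0 ω) | MeasurableSpace.comap X inferInstance]) :
    μ[(fun ω => Y ω - m ω - (Tind ω - η ω) * τ ω) |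
        MeasurableSpace.comap X inferInstance ⊔ MeasurableSpace.comap T inferInstance]
      =ᵐ[μ] 0 := by
  have hGle : (MeasurableSpace.comap X inferInstance ⊔ MeasurableSpace.comap T inferInstance
      : MeasurableSpace Ω) ≤ ‹MeasurableSpace Ω› := sup_le hXle hTle
  -- measurable versions of Y0, Y1
  set Y0' : Ω → ℝ := hY0.1.mk Y0 with hY0'def
  have hY0's : StronglyMeasurable Y0' := hY0.1.stronglyMeasurable_mk
  have hY0'ae : Y0 =ᵐ[μ] Y0' := hY0.1.ae_eq_mk
  have hY0'int : Integrable Y0' μ := hY0.congr hY0'ae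
  set Y1' : Ω → ℝ := hY1.1.mk Y1 with hY1'def
  have hY1's : StronglyMeasurable Y1' := hY1.1.stronglyMeasurable_mk
  have hY1'ae : Y1 =ᵐ[μ] Y1' := hY1.1.ae_eq_mk
  have hY1'int : Integrable Y1' μ := hY1.congr hY1'ae
  set Z' : Ω → ℝ × ℝ := fun ω => (Y0' ω, Y1' ω) with hZ'def
  have hZ'm : Measurable Z' := hY0's.measurable.prodMk hY1's.measurable
  have hZZ' : (fun ω => (Y0 ω, Y1 ω)) =ᵐ[μ] Z' := by
    filter_upwards [hY0'ae, hY1'ae] with ω h0 h1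
    rw [hZ'def]; simp only [h0, h1]
  have hZ'c : Measurable[MeasurableSpace.comap Z' inferInstance] Z' :=
    measurable_iff_comap_le.mpr le_rfl
  have hfm0 : Measurable[MeasurableSpace.comap Z' inferInstance] Y0' :=
    measurable_fst.comp hZ'c
  have hfm1 : Measurable[MeasurableSpace.comap Z' inferInstance] Y1' :=
    measurable_snd.comp hZ'c
  have hfmd : Measurable[MeasurableSpace.comap Z' inferInstance] (fun ω => Y1' ω - Y0' ω) :=
    hfm1.sub hfm0
  -- indicators
  have hBm : ∀ b : Bool, MeasurableSet (T ⁻¹' {b}) := fun b => hT (measurableSet_singleton b)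
  have hind_int : ∀ b : Bool, Integrable ((T ⁻¹' {b}).indicator (fun _ => (1:ℝ))) μ :=
    fun b => (integrable_const (1:ℝ)).indicator (hBm b)
  have hind_bd : ∀ (b : Bool) ω, |(T ⁻¹' {b}).indicator (fun _ => (1:ℝ)) ω| ≤ 1 := by
    intro b ω; by_cases h : ω ∈ T ⁻¹' {b} <;> simp [indicator, h]
  have hTind' : Tind = (T ⁻¹' {true}).indicator (fun _ => (1:ℝ)) := by
    funext ω; rw [hTind ω]
    by_cases h : T ω = true <;> simp [indicator, h]
  have hη' : η = μ[(T ⁻¹' {true}).indicator (fun _ => (1:ℝ))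
      | MeasurableSpace.comap X inferInstance] := by rw [hη, hTind']
  -- basic regularity
  have hm_sm : StronglyMeasurable[MeasurableSpace.comap X inferInstance] m := by
    rw [hm]; exact stronglyMeasurable_condExp
  have hη_sm : StronglyMeasurable[MeasurableSpace.comap X inferInstance] η := by
    rw [hη]; exact stronglyMeasurable_condExp
  have hτ_sm : StronglyMeasurable[MeasurableSpace.comap X inferInstance] τ := by
    rw [hτ]; exact stronglyMeasurable_condExp
  have hm_int : Integrable m μ := by rw [hm]; exact integrable_condExp
  have hη_int : Integrable η μ := by rw [hη]; exact integrable_condExp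
  have hτ_int : Integrable τ μ := by rw [hτ]; exact integrable_condExp
  have hη_nonneg : 0 ≤ᵐ[μ] η := by
    rw [hη']
    exact condExp_nonneg (Eventually.of_forall fun ω =>
      indicator_nonneg (fun _ _ => zero_le_one) ω)
  have hη_le_one : η ≤ᵐ[μ] fun _ => (1:ℝ) := by
    rw [hη']
    calc μ[(T ⁻¹' {true}).indicator (fun _ => (1:ℝ)) | MeasurableSpace.comap X inferInstance]
        ≤ᵐ[μ] μ[(fun _ => (1:ℝ)) | MeasurableSpace.comap X inferInstance] :=
          condExp_mono (hind_int true) (integrable_const 1)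
            (Eventually.of_forall fun ω => by
              by_cases h : ω ∈ T ⁻¹' {true} <;> simp [indicator, h])
      _ = fun _ => (1:ℝ) := condExp_const hXle 1
  have hη_abs : ∀ᵐ ω ∂μ, |η ω| ≤ 1 := by
    filter_upwards [hη_nonneg, hη_le_one] with ω h0 h1
    exact abs_le.mpr ⟨le_trans (by norm_num) (h0 : (0:ℝ) ≤ η ω), h1⟩
  have hTind_abs : ∀ ω, |Tind ω| ≤ 1 := by
    intro ω; rw [hTind ω]; by_cases h : T ω = true <;> simp [h]
  have hTind_sm : StronglyMeasurable[MeasurableSpace.comap T inferInstance] Tind := by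
    have hTm : Measurable[MeasurableSpace.comap T inferInstance] T :=
      measurable_iff_comap_le.mpr le_rfl
    have h2 : Measurable[MeasurableSpace.comap T inferInstance] Tind := by
      have hTind_eq : Tind = (fun b : Bool => if b then (1:ℝ) else 0) ∘ T :=
        funext fun ω => hTind ω
      rw [hTind_eq]
      exact (measurable_from_top).comp hTm
    exact h2.stronglyMeasurable
  -- integrability of Y and W
  have hY_int : Integrable Y μ := by
    have hYeq : Y = fun ω => (T ⁻¹' {true}).indicator Y1 ω + (T ⁻¹' {false}).indicator Y0 ω := by
      funext ω; rw [hSUTVA ω]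
      by_cases h : T ω = true <;> simp [indicator, h]
    rw [hYeq]
    exact (hY1.indicator (hBm true)).add (hY0.indicator (hBm false))
  have hprod_int : Integrable (fun ω => (Tind ω - η ω) * τ ω) μ := by
    refine Integrable.mono' (hτ_int.abs.const_mul 2)
      ((((hTind_sm.mono hTle).aestronglyMeasurable.sub
        (hη_sm.mono hXle).aestronglyMeasurable).mul
        (hτ_sm.mono hXle).aestronglyMeasurable)) ?_
    filter_upwards [hη_abs] with ω h1
    rw [Real.norm_eq_abs, abs_mul]
    have h2 : |Tind ω - η ω| ≤ 2 := by
      calc |Tind ω - η ω| ≤ |Tind ω| + |η ω| := abs_sub _ _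
        _ ≤ 1 + 1 := add_le_add (hTind_abs ω) h1
        _ = 2 := by norm_num
    exact mul_le_mul_of_nonneg_right h2 (abs_nonneg _)
  set W := (fun ω => m ω + (Tind ω - η ω) * τ ω) with hWdef
  have hW_int : Integrable W μ := by exact hm_int.add hprod_int
  have hW_sm : StronglyMeasurable[MeasurableSpace.comap X inferInstance
      ⊔ MeasurableSpace.comap T inferInstance] W := by
    have le_sup_left : MeasurableSpace.comap X inferInstance
        ≤ MeasurableSpace.comap X inferInstance ⊔ MeasurableSpace.comap T inferInstance :=
      _root_.le_sup_left
    have le_sup_right : MeasurableSpace.comap T inferInstance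
        ≤ MeasurableSpace.comap X inferInstance ⊔ MeasurableSpace.comap T inferInstance :=
      _root_.le_sup_right
    exact (hm_sm.mono le_sup_left).add
      (((hTind_sm.mono le_sup_right).sub (hη_sm.mono le_sup_left)).mul
        (hτ_sm.mono le_sup_left))
  -- conditional expectations of the measurable versions
  have hττ0 : τ =ᵐ[μ] μ[(fun ω => Y1' ω - Y0' ω) | MeasurableSpace.comap X inferInstance] := by
    rw [hτ]
    exact condExp_congr_ae (by filter_upwards [hY0'ae, hY1'ae] with ω h0 h1; rw [h0, h1])
  -- products via conditional independence
  have K1 := aux_prod μ X hXle (fun ω => (Y0 ω, Y1 ω)) Z' hZ'm hZZ' T hT hexch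
    (fun ω => Y1' ω - Y0' ω) (hY1'int.sub hY0'int) hfmd true
  have Ktrue := aux_prod μ X hXle (fun ω => (Y0 ω, Y1 ω)) Z' hZ'm hZZ' T hT hexch
    Y1' hY1'int hfm1 true
  have Kfalse := aux_prod μ X hXle (fun ω => (Y0 ω, Y1 ω)) Z' hZ'm hZZ' T hT hexch
    Y0' hY0'int hfm0 false
  -- decomposition of m
  have hd_int : Integrable (fun ω => (Y1' ω - Y0' ω)
      * (T ⁻¹' {true}).indicator (fun _ => (1:ℝ)) ω) μ := by
    refine Integrable.mono' (hY1'int.sub hY0'int).abs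
      (((hY1's.sub hY0's).aestronglyMeasurable).mul (hind_int true).1) ?_
    refine Eventually.of_forall fun ω => ?_
    rw [Real.norm_eq_abs, abs_mul]
    calc |Y1' ω - Y0' ω| * _ ≤ |Y1' ω - Y0' ω| * 1 :=
        mul_le_mul_of_nonneg_left (hind_bd true ω) (abs_nonneg _)
      _ = |Y1' ω - Y0' ω| := mul_one _
  have hm_dec : m =ᵐ[μ] fun ω =>
      (μ[Y0' | MeasurableSpace.comap X inferInstance]) ω
      + (μ[(fun ω' => Y1' ω' - Y0' ω') | MeasurableSpace.comap X inferInstance]) ω * η ω := by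
    have hYae2 : Y =ᵐ[μ] fun ω => Y0' ω + (Y1' ω - Y0' ω)
        * (T ⁻¹' {true}).indicator (fun _ => (1:ℝ)) ω := by
      filter_upwards [hY0'ae, hY1'ae] with ω h0 h1
      rw [hSUTVA ω]
      by_cases h : T ω = true <;> simp [indicator, h, h0, h1]
    have step1 : μ[Y | MeasurableSpace.comap X inferInstance]
        =ᵐ[μ] μ[(fun ω => Y0' ω + (Y1' ω - Y0' ω)
          * (T ⁻¹' {true}).indicator (fun _ => (1:ℝ)) ω)
          | MeasurableSpace.comap X inferInstance] := condExp_congr_ae hYae2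
    have step2 := condExp_add (μ := μ) (m := MeasurableSpace.comap X inferInstance)
      hY0'int hd_int
    rw [hm]
    refine step1.trans (step2.trans ?_)
    have step3 := K1
    rw [← hη'] at step3
    filter_upwards [step3] with ω hω
    rw [Pi.add_apply, hω]
  have hE1 : μ[Y1' | MeasurableSpace.comap X inferInstance] =ᵐ[μ] fun ω =>
      (μ[Y0' | MeasurableSpace.comap X inferInstance]) ω
      + (μ[(fun ω' => Y1' ω' - Y0' ω') | MeasurableSpace.comap X inferInstance]) ω := by
    have h1 : Y1' = fun ω => Y0' ω + (Y1' ω - Y0' ω) := by funext ω; ring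
    have step := condExp_add (μ := μ) (m := MeasurableSpace.comap X inferInstance)
      hY0'int (hY1'int.sub hY0'int)
    calc μ[Y1' | MeasurableSpace.comap X inferInstance]
        = μ[(fun ω => Y0' ω + (Y1' ω - Y0' ω)) | MeasurableSpace.comap X inferInstance] := by
          rw [← h1]
      _ =ᵐ[μ] _ := step

  -- core computation on the π-system atoms
  have hPb : ∀ A : Set Ω, MeasurableSet[MeasurableSpace.comap X inferInstance] A → ∀ b : Bool,
      ∫ ω in A ∩ T ⁻¹' {b}, W ω ∂μ = ∫ ω in A ∩ T ⁻¹' {b}, Y ω ∂μ := by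
    intro A hA b
    have hA' : MeasurableSet A := hXle _ hA
    set ib := (T ⁻¹' {b}).indicator (fun _ => (1:ℝ)) with hib
    set ηb := μ[ib | MeasurableSpace.comap X inferInstance] with hηb
    set cb := (if b = true then (1:ℝ) else 0) with hcb
    set U := (fun ω => m ω + (cb - η ω) * τ ω) with hU
    have hU_sm : StronglyMeasurable[MeasurableSpace.comap X inferInstance] U := by
      exact hm_sm.add ((stronglyMeasurable_const.sub hη_sm).mul hτ_sm)
    have hU_int : Integrable U μ := by
      refine hm_int.add ?_
      refine Integrable.mono' (hτ_int.abs.const_mul 2)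
        ((aestronglyMeasurable_const.sub (hη_sm.mono hXle).aestronglyMeasurable).mul
          (hτ_sm.mono hXle).aestronglyMeasurable) ?_
      filter_upwards [hη_abs] with ω h1
      rw [Real.norm_eq_abs, abs_mul]
      have hcb_abs : |cb| ≤ 1 := by rw [hcb]; by_cases h : b = true <;> simp [h]
      have h2 : |cb - η ω| ≤ 2 := by
        calc |cb - η ω| ≤ |cb| + |η ω| := abs_sub _ _
          _ ≤ 1 + 1 := add_le_add hcb_abs h1
          _ = 2 := by norm_num
      exact mul_le_mul_of_nonneg_right h2 (abs_nonneg _)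
    have hUib_int : Integrable (U * ib) μ := by
      refine Integrable.mono' hU_int.abs
        ((hU_sm.mono hXle).aestronglyMeasurable.mul (hind_int b).1) ?_
      refine Eventually.of_forall fun ω => ?_
      rw [Pi.mul_apply, Real.norm_eq_abs, abs_mul]
      calc |U ω| * |ib ω| ≤ |U ω| * 1 :=
          mul_le_mul_of_nonneg_left (hind_bd b ω) (abs_nonneg _)
        _ = |U ω| := mul_one _
    have hpullU := condExp_mul_of_stronglyMeasurable_left (μ := μ) hU_sm hUib_int (hind_int b)
    have hTindcb : ∀ ω, ω ∈ T ⁻¹' {b} → Tind ω = cb := by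
      intro ω h
      have hTb : T ω = b := h
      rw [hTind ω, hcb, hTb]
    -- LHS chain
    have hLHS : ∫ ω in A ∩ T ⁻¹' {b}, W ω ∂μ = ∫ ω in A, U ω * ib ω ∂μ := by
      rw [← setIntegral_indicator (hBm b)]
      refine integral_congr_ae (Eventually.of_forall fun ω => ?_)
      by_cases h : ω ∈ T ⁻¹' {b}
      · rw [indicator_of_mem h]
        simp only [hWdef, hU, hib, indicator_of_mem h, hTindcb ω h]
        ring
      · rw [indicator_of_notMem h]
        simp [hib, indicator_of_notMem h]
    have hLHS2 : ∫ ω in A, U ω * ib ω ∂μ = ∫ ω in A, U ω * ηb ω ∂μ := by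
      have e := (setIntegral_condExp hXle hUib_int hA (μ := μ)).symm
      calc ∫ ω in A, U ω * ib ω ∂μ
          = ∫ ω in A, (μ[U * ib | MeasurableSpace.comap X inferInstance]) ω ∂μ := e
        _ = ∫ ω in A, U ω * ηb ω ∂μ := by
            refine integral_congr_ae (ae_restrict_of_ae ?_)
            filter_upwards [hpullU] with ω hω
            rw [hω, Pi.mul_apply, hηb]
    -- RHS chain
    set Yb' := (fun ω => if b = true then Y1' ω else Y0' ω) with hYb'
    have hYb'int : Integrable Yb' μ := by
      by_cases h : b = true
      · rw [hYb']; simpa [h] using hY1'int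
      · rw [hYb']; simpa [h] using hY0'int
    have hfmb : Measurable[MeasurableSpace.comap Z' inferInstance] Yb' := by
      by_cases h : b = true
      · rw [hYb']; simpa [h] using hfm1
      · rw [hYb']; simpa [h] using hfm0
    have Kb := aux_prod μ X hXle (fun ω => (Y0 ω, Y1 ω)) Z' hZ'm hZZ' T hT hexch
      Yb' hYb'int hfmb b
    have hYib_int : Integrable (fun ω => Yb' ω * ib ω) μ := by
      refine Integrable.mono' hYb'int.abs
        (((hfmb.mono (hZ'm.comap_le) le_rfl).stronglyMeasurable.aestronglyMeasurable).mul
          (hind_int b).1) ?_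
      refine Eventually.of_forall fun ω => ?_
      rw [Real.norm_eq_abs, abs_mul]
      calc |Yb' ω| * |ib ω| ≤ |Yb' ω| * 1 :=
          mul_le_mul_of_nonneg_left (hind_bd b ω) (abs_nonneg _)
        _ = |Yb' ω| := mul_one _
    have hRHS : ∫ ω in A ∩ T ⁻¹' {b}, Y ω ∂μ = ∫ ω in A, Yb' ω * ib ω ∂μ := by
      rw [← setIntegral_indicator (hBm b)]
      refine integral_congr_ae (ae_restrict_of_ae ?_)
      filter_upwards [hY0'ae, hY1'ae] with ω h0 h1
      by_cases h : ω ∈ T ⁻¹' {b}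
      · rw [indicator_of_mem h]
        have hTb : T ω = b := h
        simp only [hSUTVA ω, hYb', hib, indicator_of_mem h, mul_one, hTb]
        by_cases hbt : b = true <;> simp [hbt, h0, h1]
      · rw [indicator_of_notMem h]
        simp [hib, indicator_of_notMem h]
    have hRHS2 : ∫ ω in A, Yb' ω * ib ω ∂μ
        = ∫ ω in A, (μ[Yb' | MeasurableSpace.comap X inferInstance]) ω * ηb ω ∂μ := by
      have e := (setIntegral_condExp hXle hYib_int hA (μ := μ)).symm
      calc ∫ ω in A, Yb' ω * ib ω ∂μ
          = ∫ ω in A, (μ[(fun ω => Yb' ω * ib ω) | MeasurableSpace.comap X inferInstance]) ω ∂μ :=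
            e
        _ = ∫ ω in A, (μ[Yb' | MeasurableSpace.comap X inferInstance]) ω * ηb ω ∂μ := by
            refine integral_congr_ae (ae_restrict_of_ae ?_)
            filter_upwards [Kb] with ω hω
            rw [hηb, hib]
            exact hω
    -- middle a.e. identity
    have hmid : ∀ᵐ ω ∂μ, U ω * ηb ω
        = (μ[Yb' | MeasurableSpace.comap X inferInstance]) ω * ηb ω := by
      by_cases hbt : b = true
      · subst hbt
        have hηbη : ηb = η := by rw [hηb, hib, hη']
        have hYb'1 : Yb' = Y1' := by funext ω; rw [hYb']; simp
        rw [hηbη, hYb'1]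
        filter_upwards [hm_dec, hττ0, hE1] with ω h1 h2 h3
        simp only [hU, hcb, if_true]
        rw [h3, h1, h2]
        ring
      · have hbf : b = false := by
          cases b
          · rfl
          · exact absurd rfl hbt
        subst hbf
        have hYb'0 : Yb' = Y0' := by funext ω; rw [hYb']; simp
        have hηb1 : ηb =ᵐ[μ] fun ω => 1 - η ω := by
          have hindf : ib = fun ω => (1:ℝ)
              - (T ⁻¹' {true}).indicator (fun _ => (1:ℝ)) ω := by
            funext ω
            rw [hib]
            by_cases h : T ω = true
            · have : ω ∉ T ⁻¹' {false} := by simp [h]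
              simp [indicator, h, this]
            · have hf : T ω = false := by
                cases hq : T ω
                · rfl
                · exact absurd hq h
              have : ω ∈ T ⁻¹' {false} := by simp [hf]
              simp [indicator, h, this, hf]
          have hsub := condExp_sub (μ := μ) (m := MeasurableSpace.comap X inferInstance)
            (integrable_const (1:ℝ)) (hind_int true)
          have : ηb =ᵐ[μ] μ[(fun _ => (1:ℝ)) - (T ⁻¹' {true}).indicator (fun _ => (1:ℝ))
              | MeasurableSpace.comap X inferInstance] := by
            rw [hηb, hindf]
            rfl
          refine this.trans (hsub.trans ?_)
          rw [condExp_const hXle (1:ℝ), ← hη']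
          refine Eventually.of_forall fun ω => ?_
          simp
        rw [hYb'0]
        filter_upwards [hm_dec, hττ0, hηb1] with ω h1 h2 h3
        simp only [hU, hcb, Bool.false_eq_true, if_false]
        rw [h1, h2]
        ring
    rw [hLHS, hLHS2, hRHS, hRHS2]
    exact integral_congr_ae (ae_restrict_of_ae hmid)

  -- the generating π-system of the sup σ-algebra
  set piC : Set (Set Ω) := {s | ∃ A, MeasurableSet[MeasurableSpace.comap X inferInstance] A ∧
      ∃ B, MeasurableSet[MeasurableSpace.comap T inferInstance] B ∧ s = A ∩ B} with hpiC
  have hπ : IsPiSystem piC := by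
    rintro s ⟨A, hA, B, hB, rfl⟩ t ⟨A', hA', B', hB', rfl⟩ _
    exact ⟨A ∩ A', hA.inter hA', B ∩ B', hB.inter hB', by
      ext x; simp only [mem_inter_iff]; tauto⟩
  have hGgen : (MeasurableSpace.comap X inferInstance ⊔ MeasurableSpace.comap T inferInstance
      : MeasurableSpace Ω) = MeasurableSpace.generateFrom piC := by
    apply le_antisymm
    · refine sup_le ?_ ?_
      · intro s hs
        exact MeasurableSpace.measurableSet_generateFrom
          ⟨s, hs, Set.univ, MeasurableSet.univ, (Set.inter_univ s).symm⟩
      · intro s hs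
        exact MeasurableSpace.measurableSet_generateFrom
          ⟨Set.univ, MeasurableSet.univ, s, hs, (Set.univ_inter s).symm⟩
    · refine MeasurableSpace.generateFrom_le ?_
      rintro s ⟨A, hA, B, hB, rfl⟩
      exact MeasurableSet.inter (MeasurableSpace.le_def.mp le_sup_left A hA)
        (MeasurableSpace.le_def.mp le_sup_right B hB)
  -- basic case of the induction
  have hbasic : ∀ s ∈ piC, ∫ ω in s, W ω ∂μ = ∫ ω in s, Y ω ∂μ := by
    rintro s ⟨A, hA, B, hB, rfl⟩
    obtain ⟨t, -, rfl⟩ := hB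
    have hA' : MeasurableSet A := hXle _ hA
    have ht4 : t = ∅ ∨ t = {false} ∨ t = {true} ∨ t = Set.univ := by
      by_cases h1 : true ∈ t <;> by_cases h2 : false ∈ t
      · right; right; right; ext x; cases x <;> simp [h1, h2]
      · right; right; left; ext x; cases x <;> simp [h1, h2]
      · right; left; ext x; cases x <;> simp [h1, h2]
      · left; ext x; cases x <;> simp [h1, h2]
    rcases ht4 with rfl | rfl | rfl | rfl
    · simp
    · exact hPb A hA false
    · exact hPb A hA true
    · have hsplit : ∀ f : Ω → ℝ, Integrable f μ →
          ∫ ω in A ∩ T ⁻¹' Set.univ, f ω ∂μ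
            = ∫ ω in A ∩ T ⁻¹' {true}, f ω ∂μ + ∫ ω in A ∩ T ⁻¹' {false}, f ω ∂μ := by
        intro f hf
        have hun : A ∩ T ⁻¹' Set.univ = (A ∩ T ⁻¹' {true}) ∪ (A ∩ T ⁻¹' {false}) := by
          ext x
          by_cases h : T x = true
          · simp [h]
          · have hf' : T x = false := by
              cases hq : T x
              · rfl
              · exact absurd hq h
            simp [hf']
        have hdisj : Disjoint (A ∩ T ⁻¹' {true}) (A ∩ T ⁻¹' {false}) := by
          refine Set.disjoint_left.mpr fun x hx1 hx2 => ?_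
          have e1 : T x = true := hx1.2
          have e2 : T x = false := hx2.2
          rw [e1] at e2; exact Bool.noConfusion e2
        rw [hun]
        exact setIntegral_union hdisj (hA'.inter (hBm false)) hf.integrableOn hf.integrableOn
      rw [hsplit W hW_int, hsplit Y hY_int, hPb A hA true, hPb A hA false]
  -- the set-integral equality on the whole sup σ-algebra
  have htot : ∫ ω, W ω ∂μ = ∫ ω, Y ω ∂μ := by
    have h := hbasic Set.univ ⟨Set.univ, MeasurableSet.univ, Set.univ, MeasurableSet.univ,
      by simp⟩
    simpa using h
  have hsetEq : ∀ s, MeasurableSet[MeasurableSpace.comap X inferInstance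
      ⊔ MeasurableSpace.comap T inferInstance] s →
      ∫ ω in s, W ω ∂μ = ∫ ω in s, Y ω ∂μ := by
    intro s hs
    refine @MeasurableSpace.induction_on_inter Ω
      (MeasurableSpace.comap X inferInstance ⊔ MeasurableSpace.comap T inferInstance)
      (fun t _ => ∫ ω in t, W ω ∂μ = ∫ ω in t, Y ω ∂μ) piC
      hGgen hπ (by simp) hbasic ?_ ?_ s hs
    · intro t ht hPt
      have ht' : MeasurableSet t := hGle _ ht
      have h1 := integral_add_compl ht' hW_int
      have h2 := integral_add_compl ht' hY_int
      have : ∫ ω in t, W ω ∂μ + ∫ ω in tᶜ, W ω ∂μ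
          = ∫ ω in t, Y ω ∂μ + ∫ ω in tᶜ, Y ω ∂μ := by rw [h1, h2, htot]
      linarith [this, hPt]
    · intro fseq hdisj hmeas hP
      rw [integral_iUnion (fun i => hGle _ (hmeas i)) hdisj hW_int.integrableOn,
        integral_iUnion (fun i => hGle _ (hmeas i)) hdisj hY_int.integrableOn]
      exact tsum_congr hP
  -- uniqueness of conditional expectation
  have hcondW : W =ᵐ[μ] μ[Y | MeasurableSpace.comap X inferInstance
      ⊔ MeasurableSpace.comap T inferInstance] :=
    ae_eq_condExp_of_forall_setIntegral_eq hGle hY_int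
      (fun s _ _ => hW_int.integrableOn) (fun s hs _ => hsetEq s hs)
      hW_sm.aestronglyMeasurable
  -- conclusion
  have hfuneq : (fun ω => Y ω - m ω - (Tind ω - η ω) * τ ω) = Y - W := by
    funext ω
    rw [Pi.sub_apply, hWdef]
    ring
  rw [hfuneq]
  have hsub := condExp_sub (μ := μ)
    (m := MeasurableSpace.comap X inferInstance ⊔ MeasurableSpace.comap T inferInstance)
    hY_int hW_int
  have hWcexp : μ[W | MeasurableSpace.comap X inferInstance
      ⊔ MeasurableSpace.comap T inferInstance] = W :=
    condExp_of_stronglyMeasurable hGle hW_sm hW_int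
  refine hsub.trans ?_
  rw [hWcexp]
  filter_upwards [hcondW] with ω hω
  rw [Pi.sub_apply, ← hω, sub_self, Pi.zero_apply]
end

section
/- With the notation of Theorem 2 of the ALRITE paper, for a single treated sample (x_i, t_i = 1, y_i) with mirror twin (x_j, t_j = 0, y_j) under embedding φ₁ (z_i = φ₁(x_i), z_j = φ₁(x_j)), true latent models ν₁⁰, ν₁¹ that are L-Lipschitz, learned model h₁⁰ that is L̂-Lipschitz, and τ̄_i = y_i - h₁⁰(z_i), τ(x_i) = (ν₁¹ - ν₁⁰)(z_i), one has (τ̄_i - τ(x_i))² ≤ 5(y_i - ν₁¹(z_i))² + 5(y_j - ν₁⁰(z_j))² + 5(y_j - h₁⁰(z_j))² + 5(L² + L̂²)‖z_j - z_i‖². -/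
theorem stmt_15 {Z : Type*} [NormedAddCommGroup Z] (L Lhat : NNReal)
    (ν10 ν11 h10 : Z → ℝ)
    (hν10 : LipschitzWith L ν10) (hν11 : LipschitzWith L ν11)
    (hh10 : LipschitzWith Lhat h10)
    (zi zj : Z) (yi yj : ℝ)
    (τbar : ℝ) (hτbar : τbar = yi - h10 zi)
    (τi : ℝ) (hτi : τi = ν11 zi - ν10 zi) :
    (τbar - τi)^2 ≤
      5 * (yi - ν11 zi)^2 + 5 * (yj - ν10 zj)^2 + 5 * (yj - h10 zj)^2
        + 5 * ((L : ℝ)^2 + (Lhat : ℝ)^2) * ‖zj - zi‖^2 := by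
  have hb : |ν10 zi - ν10 zj| ≤ (L : ℝ) * ‖zj - zi‖ := by
    have := hν10.dist_le_mul zi zj
    rw [Real.dist_eq] at this
    simpa [dist_eq_norm, norm_sub_rev zi zj] using this
  have he : |h10 zj - h10 zi| ≤ (Lhat : ℝ) * ‖zj - zi‖ := by
    have := hh10.dist_le_mul zj zi
    rw [Real.dist_eq] at this
    simpa [dist_eq_norm] using this
  have hb2 : (ν10 zi - ν10 zj)^2 ≤ (L : ℝ)^2 * ‖zj - zi‖^2 := by
    have := sq_le_sq' (neg_le_of_abs_le hb) (le_of_abs_le hb)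
    calc (ν10 zi - ν10 zj)^2 ≤ ((L : ℝ) * ‖zj - zi‖)^2 := this
      _ = (L : ℝ)^2 * ‖zj - zi‖^2 := by ring
  have he2 : (h10 zj - h10 zi)^2 ≤ (Lhat : ℝ)^2 * ‖zj - zi‖^2 := by
    have := sq_le_sq' (neg_le_of_abs_le he) (le_of_abs_le he)
    calc (h10 zj - h10 zi)^2 ≤ ((Lhat : ℝ) * ‖zj - zi‖)^2 := this
      _ = (Lhat : ℝ)^2 * ‖zj - zi‖^2 := by ring
  subst hτbar hτi
  nlinarith [sq_nonneg ((yi - ν11 zi) - (ν10 zi - ν10 zj)),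
    sq_nonneg ((yi - ν11 zi) - (ν10 zj - yj)),
    sq_nonneg ((yi - ν11 zi) - (yj - h10 zj)),
    sq_nonneg ((yi - ν11 zi) - (h10 zj - h10 zi)),
    sq_nonneg ((ν10 zi - ν10 zj) - (ν10 zj - yj)),
    sq_nonneg ((ν10 zi - ν10 zj) - (yj - h10 zj)),
    sq_nonneg ((ν10 zi - ν10 zj) - (h10 zj - h10 zi)),
    sq_nonneg ((ν10 zj - yj) - (yj - h10 zj)),
    sq_nonneg ((ν10 zj - yj) - (h10 zj - h10 zi)),
    sq_nonneg ((yj - h10 zj) - (h10 zj - h10 zi))]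
end
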